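/- Let G be a finite abelian group with |G| > 2, exp(G) = n, and r(G) ≤ n − 1, and let G₀ ⊆ G be a subset with Δ(G₀) ≠ ∅ and min Δ(G₀) = max Δ*(G). Then G₀ is minimal non-half-factorial and not an LCN-set if and only if G₀ = {g, −g} for some g ∈ G with ord(g) = n. -/

import Mathlib

open Multiset

section Defs

variable {G : Type*} [AddCommGroup G]

/-- `S` is a zero-sum sequence over `G₀`: a multiset with entries in `G₀` and sum `0`. -/
def IsZeroSumSeq (G₀ : Set G) (S : Multiset G) : Prop :=
  (∀ x ∈ S, x ∈ G₀) ∧ S.sum = 0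

/-- `S` is an atom over `G₀`: a nonempty zero-sum sequence over `G₀` that is not the
union of two nonempty zero-sum sequences over `G₀`. -/
def IsAtomSeq (G₀ : Set G) (S : Multiset G) : Prop :=
  IsZeroSumSeq G₀ S ∧ S ≠ 0 ∧
    ∀ A B : Multiset G, IsZeroSumSeq G₀ A → IsZeroSumSeq G₀ B →
      A ≠ 0 → B ≠ 0 → S ≠ A + B

/-- The set of lengths of `B`: all `k` such that `B` is a union of `k` atoms over `G₀`. -/
def LengthSet (G₀ : Set G) (B : Multiset G) : Set ℕ :=
  {k | ∃ l : Multiset (Multiset G), Multiset.card l = k ∧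
      (∀ A ∈ l, IsAtomSeq G₀ A) ∧ l.sum = B}

/-- The set of successive distances of a set of naturals. -/
def DeltaOf (L : Set ℕ) : Set ℕ :=
  {d | ∃ x ∈ L, ∃ y ∈ L, x < y ∧ y - x = d ∧ ∀ z ∈ L, ¬(x < z ∧ z < y)}

/-- The set of distances `Δ(G₀)`. -/
def DeltaSet (G₀ : Set G) : Set ℕ :=
  {d | ∃ B : Multiset G, IsZeroSumSeq G₀ B ∧ B ≠ 0 ∧ d ∈ DeltaOf (LengthSet G₀ B)}

/-- `G₀` is half-factorial if `Δ(G₀) = ∅`. -/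
def IsHalfFactorialSet (G₀ : Set G) : Prop := DeltaSet G₀ = ∅

/-- `G₀` is minimal non-half-factorial if `Δ(G₀) ≠ ∅` and every proper subset is
half-factorial. -/
def IsMinNonHalfFactorial (G₀ : Set G) : Prop :=
  (DeltaSet G₀).Nonempty ∧ ∀ G₁ : Set G, G₁ ⊂ G₀ → DeltaSet G₁ = ∅

/-- The cross number `k(S) = Σ 1/ord(g)` of a multiset over `G`. -/
noncomputable def crossNumber (S : Multiset G) : ℚ :=
  (S.map (fun g => ((addOrderOf g : ℚ))⁻¹)).sum

/-- `G₀` is an LCN-set if every atom over `G₀` has cross number at least 1. -/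
def IsLCNSet (G₀ : Set G) : Prop :=
  ∀ U : Multiset G, IsAtomSeq G₀ U → 1 ≤ crossNumber U

/-- A subset of `G \ {0}` is independent if any integral linear relation on its elements
has all summands zero. -/
def IsIndependentSet (E : Set G) : Prop :=
  (0 : G) ∉ E ∧ ∀ s : Finset G, ↑s ⊆ E → ∀ f : G → ℤ,
    (∑ e ∈ s, f e • e) = 0 → ∀ e ∈ s, f e • e = 0

/-- `d` is a greatest common divisor of the set `S` of naturals. -/
def IsSetGcd (S : Set ℕ) (d : ℕ) : Prop :=
  (∀ s ∈ S, d ∣ s) ∧ ∀ e : ℕ, (∀ s ∈ S, e ∣ s) → e ∣ d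

end Defs

/-- The set of minimal distances `Δ*(G)`. -/
def DeltaStar (G : Type*) [AddCommGroup G] : Set ℕ :=
  {d | ∃ G₀ : Set G, (DeltaSet G₀).Nonempty ∧ d = sInf (DeltaSet G₀)}

/-- The `p`-rank of a finite abelian group: `log_p` of the order of the `p`-torsion
subgroup `{x | p • x = 0}`. -/
noncomputable def pRank (G : Type*) [AddCommGroup G] (p : ℕ) : ℕ :=
  Nat.log p (Nat.card {x : G // p • x = 0})

/-- The rank of a finite abelian group: the maximum of the `p`-ranks over all primes. -/
noncomputable def rankG (G : Type*) [AddCommGroup G] : ℕ :=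
  sSup {r : ℕ | ∃ p : ℕ, p.Prime ∧ r = pRank G p}

section Helpers

variable {G : Type*} [AddCommGroup G]

namespace Stmt10Aux

open Multiset

/-- Positivity of elements of a `DeltaSet`. -/
lemma deltaSet_pos {G₀ : Set G} {d : ℕ} (hd : d ∈ DeltaSet G₀) : 0 < d := by
  obtain ⟨B, -, -, x, -, y, -, hxy, hdx, -⟩ := hd
  omega

lemma eq_repl2 {α : Type*} [DecidableEq α] {x y : α} (hxy : x ≠ y) (S : Multiset α)
    (hS : ∀ z ∈ S, z = x ∨ z = y) :
    S = replicate (count x S) x + replicate (count y S) y := by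
  ext z
  rw [count_add, count_replicate, count_replicate]
  by_cases hzx : x = z
  · subst hzx
    simp [Ne.symm hxy, hxy]
  · by_cases hzy : y = z
    · subst hzy
      simp [hzx, Ne.symm hxy]
    · simp only [if_neg hzx, if_neg hzy, add_zero]
      have hzS : z ∉ S := by
        intro hz
        rcases hS z hz with rfl | rfl
        · exact hzx rfl
        · exact hzy rfl
      simp [count_eq_zero_of_notMem hzS]

lemma eq_repl3 {α : Type*} [DecidableEq α] {x y w : α} (hxy : x ≠ y) (hxw : x ≠ w)
    (hyw : y ≠ w) (S : Multiset α) (hS : ∀ z ∈ S, z = x ∨ z = y ∨ z = w) :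
    S = replicate (count x S) x + replicate (count y S) y + replicate (count w S) w := by
  ext z
  rw [count_add, count_add, count_replicate, count_replicate, count_replicate]
  by_cases hzx : x = z
  · subst hzx
    simp [Ne.symm hxy, Ne.symm hxw, hxy, hxw]
  · by_cases hzy : y = z
    · subst hzy
      simp [hzx, Ne.symm hyw, hyw]
    · by_cases hzw : w = z
      · subst hzw
        simp [hzx, hzy]
      · simp only [if_neg hzx, if_neg hzy, if_neg hzw, add_zero]
        have hzS : z ∉ S := by
          intro hz
          rcases hS z hz with rfl | rfl | rfl
          · exact hzx rfl
          · exact hzy rfl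
          · exact hzw rfl
        simp [count_eq_zero_of_notMem hzS]

/-- Sum of a multiset supported on `{g, -g}`. -/
lemma sum_repl_pair (g : G) (a b : ℕ) :
    (replicate a g + replicate b (-g)).sum = ((a : ℤ) - (b : ℤ)) • g := by
  rw [Multiset.sum_add, Multiset.sum_replicate, Multiset.sum_replicate, sub_zsmul,
    natCast_zsmul, natCast_zsmul, smul_neg]

lemma sum_repl_pair_eq_zero_iff (g : G) (a b : ℕ) :
    (replicate a g + replicate b (-g)).sum = 0 ↔ ((addOrderOf g : ℤ)) ∣ (a : ℤ) - (b : ℤ) := by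
  rw [sum_repl_pair, addOrderOf_dvd_iff_zsmul_eq_zero]

/-- `g^{ord g}` is always an atom. -/
lemma isAtom_replicate [Finite G] {G₀ : Set G} {h : G} (hh : h ∈ G₀) :
    IsAtomSeq G₀ (replicate (addOrderOf h) h) := by
  have hpos : 0 < addOrderOf h := addOrderOf_pos h
  refine ⟨⟨fun x hx => (eq_of_mem_replicate hx) ▸ hh,
      by rw [Multiset.sum_replicate]; exact addOrderOf_nsmul_eq_zero h⟩, ?_, ?_⟩
  · intro h0
    have := congrArg Multiset.card h0
    simp only [Multiset.card_replicate, Multiset.card_zero] at this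
    omega
  · rintro A B hA hB hA0 hB0 hAB
    have hAh : ∀ x ∈ A, x = h := fun x hx =>
      eq_of_mem_replicate (hAB ▸ mem_of_le (Multiset.le_add_right _ _) hx)
    have hBh : ∀ x ∈ B, x = h := fun x hx =>
      eq_of_mem_replicate (hAB ▸ mem_of_le (Multiset.le_add_left _ _) hx)
    have hArep : A = replicate (Multiset.card A) h := eq_replicate_card.2 hAh
    have hBrep : B = replicate (Multiset.card B) h := eq_replicate_card.2 hBh
    have hAsum : Multiset.card A • h = 0 := by
      conv_lhs => rw [← Multiset.sum_replicate, ← hArep]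
      exact hA.2
    have hBsum : Multiset.card B • h = 0 := by
      conv_lhs => rw [← Multiset.sum_replicate, ← hBrep]
      exact hB.2
    have hdA : addOrderOf h ∣ Multiset.card A := addOrderOf_dvd_of_nsmul_eq_zero hAsum
    have hdB : addOrderOf h ∣ Multiset.card B := addOrderOf_dvd_of_nsmul_eq_zero hBsum
    have hcards : Multiset.card A + Multiset.card B = addOrderOf h := by
      rw [← Multiset.card_add, ← hAB, Multiset.card_replicate]
    have hA1 : 0 < Multiset.card A := Multiset.card_pos.2 hA0
    have hB1 : 0 < Multiset.card B := Multiset.card_pos.2 hB0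
    have : addOrderOf h ≤ Multiset.card A := Nat.le_of_dvd hA1 hdA
    have : addOrderOf h ≤ Multiset.card B := Nat.le_of_dvd hB1 hdB
    omega

/-- The pair `{g, -g}` is an atom whenever `g ≠ 0`. -/
lemma isAtom_pair [Finite G] {G₀ : Set G} {g : G} (hg : g ∈ G₀) (hg' : -g ∈ G₀)
    (h0 : g ≠ 0) : IsAtomSeq G₀ ({g, -g} : Multiset G) := by
  refine ⟨⟨?_, by simp⟩, by simp, ?_⟩
  · intro x hx
    rcases Multiset.mem_cons.1 hx with rfl | hx
    · exact hg
    · rw [Multiset.mem_singleton.1 hx]; exact hg'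
  · rintro A B hA hB hA0 hB0 hAB
    have hcards : Multiset.card A + Multiset.card B = 2 := by
      rw [← Multiset.card_add, ← hAB]; rfl
    have hA1 : 0 < Multiset.card A := Multiset.card_pos.2 hA0
    have hB1 : 0 < Multiset.card B := Multiset.card_pos.2 hB0
    have hcA : Multiset.card A = 1 := by omega
    obtain ⟨x, rfl⟩ := Multiset.card_eq_one.1 hcA
    have hx0 : x = 0 := by simpa using hA.2
    have hxmem : x ∈ ({g, -g} : Multiset G) := by
      rw [hAB]; exact Multiset.mem_add.2 (Or.inl (Multiset.mem_singleton_self x))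
    rcases Multiset.mem_cons.1 hxmem with rfl | hx
    · exact h0 hx0
    · rw [Multiset.mem_singleton.1 hx] at hx0
      exact h0 (neg_eq_zero.1 hx0)

end Stmt10Aux

end Helpers
section Helpers2

variable {G : Type*} [AddCommGroup G]

namespace Stmt10Aux

open Multiset

variable [Finite G] [DecidableEq G]

/-- Atoms over the pair `{g, -g}` are `g^n`, `(-g)^n` or `{g, -g}`. -/
lemma atoms_pair_classify {g : G} (h3 : 3 ≤ addOrderOf g) {S : Multiset G}
    (hS : IsAtomSeq ({g, -g} : Set G) S) :
    S = replicate (addOrderOf g) g ∨ S = replicate (addOrderOf g) (-g) ∨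
      S = ({g, -g} : Multiset G) := by
  set n := addOrderOf g with hn
  have h0 : g ≠ 0 := by
    intro h; rw [h, addOrderOf_zero] at hn; omega
  have hgneg : g ≠ -g := by
    intro h
    have h2 : (2 : ℕ) • g = 0 := by
      rw [two_nsmul]; nth_rewrite 2 [h]; exact add_neg_cancel g
    have := addOrderOf_dvd_of_nsmul_eq_zero h2
    rw [← hn] at this
    have := Nat.le_of_dvd (by norm_num) this
    omega
  have hmem : ∀ z ∈ S, z = g ∨ z = -g := by
    intro z hz
    have := hS.1.1 z hz
    simpa using this
  set a := count g S with hA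
  set b := count (-g) S with hB
  have hdecomp : S = replicate a g + replicate b (-g) := eq_repl2 hgneg S hmem
  have hdvd : (n : ℤ) ∣ (a : ℤ) - (b : ℤ) := by
    rw [hn]
    rw [← sum_repl_pair_eq_zero_iff, ← hdecomp]
    exact hS.1.2
  have hgmem : g ∈ ({g, -g} : Set G) := Set.mem_insert _ _
  have hngmem : -g ∈ ({g, -g} : Set G) := Set.mem_insert_iff.2 (Or.inr (Set.mem_singleton _))
  have hSnz : S ≠ 0 := hS.2.1
  have hcardpos : 0 < a + b := by
    rcases Nat.eq_zero_or_pos (a + b) with h | h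
    · exfalso
      have ha : a = 0 := by omega
      have hb : b = 0 := by omega
      rw [ha, hb] at hdecomp
      simp only [replicate_zero, add_zero] at hdecomp
      exact hSnz hdecomp
    · exact h
  by_cases hb0 : b = 0
  · -- S = g^a with n ∣ a
    rw [hb0] at hdecomp hdvd
    simp only [replicate_zero, add_zero] at hdecomp
    have hna : n ∣ a := by
      have : (n : ℤ) ∣ (a : ℤ) := by simpa using hdvd
      exact_mod_cast this
    have ha0 : a ≠ 0 := by omega
    have han : a = n := by
      rcases Nat.lt_or_ge a (2 * n) with h | h
      · obtain ⟨k, hk⟩ := hna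
        have hk2 : k < 2 := by
          by_contra hk2
          push_neg at hk2
          have : n * 2 ≤ n * k := Nat.mul_le_mul_left n hk2
          omega
        interval_cases k
        · omega
        · omega
      · exfalso
        apply hS.2.2 (replicate n g) (replicate (a - n) g)
        · exact ⟨fun x hx => (eq_of_mem_replicate hx) ▸ hgmem,
            by rw [Multiset.sum_replicate, hn]; exact addOrderOf_nsmul_eq_zero g⟩
        · refine ⟨fun x hx => (eq_of_mem_replicate hx) ▸ hgmem, ?_⟩
          rw [Multiset.sum_replicate]
          have : n ∣ a - n := Nat.dvd_sub hna dvd_rfl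
          obtain ⟨k, hk⟩ := this
          rw [hk, mul_nsmul, hn, addOrderOf_nsmul_eq_zero g, smul_zero]
        · intro hz
          have := congrArg Multiset.card hz
          simp only [Multiset.card_replicate, Multiset.card_zero] at this
          omega
        · intro hz
          have := congrArg Multiset.card hz
          simp only [Multiset.card_replicate, Multiset.card_zero] at this
          omega
        · rw [hdecomp, ← Multiset.replicate_add]
          congr 1
          omega
    left; rw [hdecomp, han]
  · by_cases ha0 : a = 0
    · -- S = (-g)^b with n ∣ b
      rw [ha0] at hdecomp hdvd
      simp only [replicate_zero, zero_add] at hdecomp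
      have hnb : n ∣ b := by
        have : (n : ℤ) ∣ (b : ℤ) := by
          have h' := hdvd
          simp only [Nat.cast_zero, zero_sub, dvd_neg] at h'
          exact h'
        exact_mod_cast this
      have hordneg : addOrderOf (-g) = n := by rw [addOrderOf_neg]
      have hbn : b = n := by
        rcases Nat.lt_or_ge b (2 * n) with h | h
        · obtain ⟨k, hk⟩ := hnb
          have hk2 : k < 2 := by
            by_contra hk2
            push_neg at hk2
            have : n * 2 ≤ n * k := Nat.mul_le_mul_left n hk2
            omega
          interval_cases k
          · omega
          · omega
        · exfalso
          apply hS.2.2 (replicate n (-g)) (replicate (b - n) (-g))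
          · refine ⟨fun x hx => (eq_of_mem_replicate hx) ▸ hngmem, ?_⟩
            rw [Multiset.sum_replicate, ← hordneg]
            exact addOrderOf_nsmul_eq_zero (-g)
          · refine ⟨fun x hx => (eq_of_mem_replicate hx) ▸ hngmem, ?_⟩
            rw [Multiset.sum_replicate]
            have : n ∣ b - n := Nat.dvd_sub hnb dvd_rfl
            obtain ⟨k, hk⟩ := this
            rw [hk, mul_nsmul, ← hordneg, addOrderOf_nsmul_eq_zero (-g), smul_zero]
          · intro hz
            have := congrArg Multiset.card hz
            simp only [Multiset.card_replicate, Multiset.card_zero] at this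
            omega
          · intro hz
            have := congrArg Multiset.card hz
            simp only [Multiset.card_replicate, Multiset.card_zero] at this
            omega
          · rw [hdecomp, ← Multiset.replicate_add]
            congr 1
            omega
      right; left; rw [hdecomp, hbn]
    · -- a ≥ 1, b ≥ 1
      have ha1 : 1 ≤ a := by omega
      have hb1 : 1 ≤ b := by omega
      have hab1 : a = 1 ∧ b = 1 := by
        by_contra hcon
        apply hS.2.2 ({g, -g} : Multiset G) (replicate (a - 1) g + replicate (b - 1) (-g))
        · refine ⟨?_, by simp⟩
          intro x hx
          rcases Multiset.mem_cons.1 hx with rfl | hx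
          · exact hgmem
          · rw [Multiset.mem_singleton.1 hx]; exact hngmem
        · refine ⟨?_, ?_⟩
          · intro x hx
            rcases Multiset.mem_add.1 hx with hx | hx
            · exact (eq_of_mem_replicate hx) ▸ hgmem
            · exact (eq_of_mem_replicate hx) ▸ hngmem
          · rw [sum_repl_pair_eq_zero_iff, ← hn]
            have : ((a : ℤ) - 1) - ((b : ℤ) - 1) = (a : ℤ) - b := by ring
            have hc1 : ((a - 1 : ℕ) : ℤ) = (a : ℤ) - 1 := by
              push_cast [ha1]; ring
            have hc2 : ((b - 1 : ℕ) : ℤ) = (b : ℤ) - 1 := by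
              push_cast [hb1]; ring
            rw [hc1, hc2, this]
            exact hdvd
        · simp
        · intro hzero
          have := congrArg Multiset.card hzero
          simp only [Multiset.card_add, Multiset.card_replicate, Multiset.card_zero] at this
          omega
        · rw [hdecomp]
          have h1 : replicate a g = replicate 1 g + replicate (a - 1) g := by
            rw [← Multiset.replicate_add]; congr 1; omega
          have h2 : replicate b (-g) = replicate 1 (-g) + replicate (b - 1) (-g) := by
            rw [← Multiset.replicate_add]; congr 1; omega
          rw [h1, h2]
          have hpair : ({g, -g} : Multiset G) = replicate 1 g + replicate 1 (-g) := by
            simp only [Multiset.replicate_one]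
            rw [Multiset.singleton_add]
            rfl
          rw [hpair]
          abel
      right; right
      rw [hdecomp, hab1.1, hab1.2]
      simp only [Multiset.replicate_one]
      rw [Multiset.singleton_add]
      rfl

end Stmt10Aux

end Helpers2
section Helpers3

variable {G : Type*} [AddCommGroup G]

namespace Stmt10Aux

open Multiset

lemma card_msum {α : Type*} (l : Multiset (Multiset α)) :
    Multiset.card l.sum = (l.map Multiset.card).sum := by
  induction l using Multiset.induction with
  | empty => simp
  | cons A l ih => simp [ih]

lemma sum_msum {α : Type*} [AddCommMonoid α] (l : Multiset (Multiset α)) :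
    l.sum.sum = (l.map Multiset.sum).sum := by
  induction l using Multiset.induction with
  | empty => simp
  | cons A l ih => simp [ih]

lemma mem_msum {α : Type*} {l : Multiset (Multiset α)} {x : α} (hx : x ∈ l.sum) :
    ∃ A ∈ l, x ∈ A := by
  induction l using Multiset.induction with
  | empty => simp at hx
  | cons A l ih =>
    rw [Multiset.sum_cons, Multiset.mem_add] at hx
    rcases hx with hx | hx
    · exact ⟨A, Multiset.mem_cons_self _ _, hx⟩
    · obtain ⟨B, hB, hxB⟩ := ih hx
      exact ⟨B, Multiset.mem_cons_of_mem hB, hxB⟩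

lemma map_replicate_sum {α : Type*} (n : ℕ) (U : Multiset α) :
    ((U.map fun x => replicate n x).sum) = n • U := by
  induction U using Multiset.induction with
  | empty => simp
  | cons a U ih =>
    rw [Multiset.map_cons, Multiset.sum_cons, ih, ← Multiset.singleton_add, smul_add,
      Multiset.nsmul_singleton]

lemma card_le_sum_map {α : Type*} (U : Multiset α) (f : α → ℕ)
    (hf : ∀ x ∈ U, 1 ≤ f x) : Multiset.card U ≤ (U.map f).sum := by
  induction U using Multiset.induction with
  | empty => simp
  | cons a U ih =>
    rw [Multiset.map_cons, Multiset.sum_cons, Multiset.card_cons]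
    have h1 : 1 ≤ f a := hf a (Multiset.mem_cons_self _ _)
    have h2 := ih fun x hx => hf x (Multiset.mem_cons_of_mem hx)
    omega

variable [Finite G] [DecidableEq G]

/-- Structure of lengths of factorizations over a pair `{g, -g}`. -/
lemma length_eq {g : G} (h3 : 3 ≤ addOrderOf g) {B : Multiset G} {ℓ : ℕ}
    (hℓ : ℓ ∈ LengthSet ({g, -g} : Set G) B) :
    ∃ t s p : ℕ, ℓ = t + s + p ∧ count g B = t * addOrderOf g + p ∧
      count (-g) B = s * addOrderOf g + p := by
  set n := addOrderOf g with hn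
  have h0 : g ≠ 0 := by
    intro h; rw [h, addOrderOf_zero] at hn; omega
  have hgneg : g ≠ -g := by
    intro h
    have h2 : (2 : ℕ) • g = 0 := by
      rw [two_nsmul]; nth_rewrite 2 [h]; exact add_neg_cancel g
    have := addOrderOf_dvd_of_nsmul_eq_zero h2
    rw [← hn] at this
    have := Nat.le_of_dvd (by norm_num) this
    omega
  obtain ⟨l, hcard, hatoms, hsum⟩ := hℓ
  set A₁ := replicate n g with hA₁
  set A₂ := replicate n (-g) with hA₂
  set A₃ := ({g, -g} : Multiset G) with hA₃
  have h12 : A₁ ≠ A₂ := by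
    intro h
    have : count g A₁ = count g A₂ := by rw [h]
    rw [hA₁, hA₂, count_replicate, count_replicate, if_pos rfl,
      if_neg (Ne.symm hgneg)] at this
    omega
  have h13 : A₁ ≠ A₃ := by
    intro h
    have : Multiset.card A₁ = Multiset.card A₃ := by rw [h]
    rw [hA₁, Multiset.card_replicate, hA₃] at this
    simp at this
    omega
  have h23 : A₂ ≠ A₃ := by
    intro h
    have : Multiset.card A₂ = Multiset.card A₃ := by rw [h]
    rw [hA₂, Multiset.card_replicate, hA₃] at this
    simp at this
    omega
  have hmem : ∀ A ∈ l, A = A₁ ∨ A = A₂ ∨ A = A₃ := fun A hA =>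
    atoms_pair_classify h3 (hatoms A hA)
  set t := count A₁ l with ht
  set s := count A₂ l with hs
  set p := count A₃ l with hp
  have hdecomp : l = replicate t A₁ + replicate s A₂ + replicate p A₃ :=
    eq_repl3 h12 h13 h23 l hmem
  refine ⟨t, s, p, ?_, ?_, ?_⟩
  · rw [← hcard, hdecomp]
    simp [Multiset.card_add, Multiset.card_replicate]
  · have hc3 : count g ({g, -g} : Multiset G) = 1 := by
      rw [show ({g, -g} : Multiset G) = g ::ₘ {-g} from rfl, Multiset.count_cons_self,
        Multiset.count_singleton, if_neg hgneg]
    rw [← hsum, hdecomp]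
    simp only [Multiset.sum_add, Multiset.sum_replicate, Multiset.count_add,
      Multiset.count_nsmul, hA₁, hA₂, hA₃, hc3, count_replicate,
      if_pos rfl, if_neg (Ne.symm hgneg)]
    simp [mul_comm]
  · have hc3 : count (-g) ({g, -g} : Multiset G) = 1 := by
      rw [show ({g, -g} : Multiset G) = g ::ₘ {-g} from rfl, Multiset.count_cons_of_ne
        (Ne.symm hgneg), Multiset.count_singleton, if_pos rfl]
    rw [← hsum, hdecomp]
    simp only [Multiset.sum_add, Multiset.sum_replicate, Multiset.count_add,
      Multiset.count_nsmul, hA₁, hA₂, hA₃, hc3, count_replicate,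
      if_pos rfl, if_neg hgneg]
    simp [mul_comm]

/-- Any two lengths over a pair `{g, -g}` are congruent mod `ord(g) - 2`. -/
lemma length_congr {g : G} (h3 : 3 ≤ addOrderOf g) {B : Multiset G} {ℓ₁ ℓ₂ : ℕ}
    (h1 : ℓ₁ ∈ LengthSet ({g, -g} : Set G) B) (h2 : ℓ₂ ∈ LengthSet ({g, -g} : Set G) B) :
    ((addOrderOf g : ℤ) - 2) ∣ (ℓ₁ : ℤ) - (ℓ₂ : ℤ) := by
  obtain ⟨t₁, s₁, p₁, hl1, hc1, hd1⟩ := length_eq h3 h1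
  obtain ⟨t₂, s₂, p₂, hl2, hc2, hd2⟩ := length_eq h3 h2
  set n := addOrderOf g with hn
  have hnz : (n : ℤ) ≠ 0 := by
    have : 0 < n := by omega
    exact_mod_cast this.ne'
  have e1 : (n : ℤ) * ((t₁ : ℤ) - t₂) = (p₂ : ℤ) - p₁ := by
    have := hc1.symm.trans hc2
    have h' : ((t₁ * n + p₁ : ℕ) : ℤ) = ((t₂ * n + p₂ : ℕ) : ℤ) := by exact_mod_cast this
    push_cast at h'
    linarith
  have e2 : (n : ℤ) * ((s₁ : ℤ) - s₂) = (p₂ : ℤ) - p₁ := by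
    have := hd1.symm.trans hd2
    have h' : ((s₁ * n + p₁ : ℕ) : ℤ) = ((s₂ * n + p₂ : ℕ) : ℤ) := by exact_mod_cast this
    push_cast at h'
    linarith
  have e3 : (t₁ : ℤ) - t₂ = (s₁ : ℤ) - s₂ := by
    have := e1.trans e2.symm
    exact mul_left_cancel₀ hnz this
  refine ⟨(t₂ : ℤ) - t₁, ?_⟩
  have hl1' : (ℓ₁ : ℤ) = (t₁ : ℤ) + s₁ + p₁ := by exact_mod_cast congrArg Nat.cast hl1
  have hl2' : (ℓ₂ : ℤ) = (t₂ : ℤ) + s₂ + p₂ := by exact_mod_cast congrArg Nat.cast hl2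
  linear_combination hl1' - hl2' + e1 - e3

end Stmt10Aux

end Helpers3
section Helpers4

variable {G : Type*} [AddCommGroup G]

namespace Stmt10Aux

open Multiset

variable [Finite G] [DecidableEq G]

/-- Any subset of a singleton has empty `DeltaSet`. -/
lemma deltaSet_subsingleton {G₀ : Set G} {h : G} (hsub : G₀ ⊆ {h}) :
    DeltaSet G₀ = ∅ := by
  ext d
  simp only [Set.mem_empty_iff_false, iff_false]
  rintro ⟨B, hB, hB0, x, hx, y, hy, hxy, -, -⟩
  have key : ∀ ℓ ∈ LengthSet G₀ B, ℓ * addOrderOf h = Multiset.card B := by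
    rintro ℓ ⟨l, hcard, hatoms, hsum⟩
    have hAT : ∀ A ∈ l, A = replicate (addOrderOf h) h := by
      intro A hA
      obtain ⟨⟨hAmem, hAsum⟩, hA0, hAatom⟩ := hatoms A hA
      have hAh : ∀ x ∈ A, x = h := fun x hx => hsub (hAmem x hx)
      have hhmem : h ∈ G₀ := by
        obtain ⟨x, hx⟩ := Multiset.exists_mem_of_ne_zero hA0
        have := hAmem x hx
        rwa [hAh x hx] at this
      have hArep : A = replicate (Multiset.card A) h := eq_replicate_card.2 hAh
      have hAsum' : Multiset.card A • h = 0 := by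
        conv_lhs => rw [← Multiset.sum_replicate, ← hArep]
        exact hAsum
      have hdvd : addOrderOf h ∣ Multiset.card A := addOrderOf_dvd_of_nsmul_eq_zero hAsum'
      have hposA : 0 < Multiset.card A := Multiset.card_pos.2 hA0
      have hposh : 0 < addOrderOf h := addOrderOf_pos h
      have hcardA : Multiset.card A = addOrderOf h := by
        by_contra hcon
        have hgt : addOrderOf h < Multiset.card A :=
          lt_of_le_of_ne (Nat.le_of_dvd hposA hdvd) (Ne.symm hcon)
        apply hAatom (replicate (addOrderOf h) h)
          (replicate (Multiset.card A - addOrderOf h) h)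
        · exact ⟨fun x hx => (eq_of_mem_replicate hx) ▸ hhmem,
            by rw [Multiset.sum_replicate]; exact addOrderOf_nsmul_eq_zero h⟩
        · refine ⟨fun x hx => (eq_of_mem_replicate hx) ▸ hhmem, ?_⟩
          rw [Multiset.sum_replicate]
          obtain ⟨k, hk⟩ := Nat.dvd_sub hdvd (dvd_refl (addOrderOf h))
          rw [hk, mul_nsmul, addOrderOf_nsmul_eq_zero h, smul_zero]
        · intro hz
          have := congrArg Multiset.card hz
          simp only [Multiset.card_replicate, Multiset.card_zero] at this
          omega
        · intro hz
          have := congrArg Multiset.card hz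
          simp only [Multiset.card_replicate, Multiset.card_zero] at this
          omega
        · conv_lhs => rw [hArep]
          rw [← Multiset.replicate_add]
          congr 1
          omega
      rw [← hcardA]
      exact hArep
    have hlrep : l = replicate (Multiset.card l) (replicate (addOrderOf h) h) :=
      eq_replicate_card.2 hAT
    rw [← hsum, hlrep, card_msum]
    simp only [Multiset.map_replicate, Multiset.card_replicate, Multiset.sum_replicate,
      smul_eq_mul, hcard]
  have hxc := key x hx
  have hyc := key y hy
  have hpos : 0 < addOrderOf h := addOrderOf_pos h
  have : x = y := by
    have := hxc.trans hyc.symm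
    exact Nat.eq_of_mul_eq_mul_right hpos this
  omega

/-- `n - 2 ∈ Δ({g, -g})` when `ord g = n ≥ 3`. -/
lemma mem_deltaSet_pair {g : G} (h3 : 3 ≤ addOrderOf g) :
    addOrderOf g - 2 ∈ DeltaSet ({g, -g} : Set G) := by
  set n := addOrderOf g with hn
  have h0 : g ≠ 0 := by
    intro h; rw [h, addOrderOf_zero] at hn; omega
  have hgmem : g ∈ ({g, -g} : Set G) := Set.mem_insert _ _
  have hngmem : -g ∈ ({g, -g} : Set G) := Set.mem_insert_iff.2 (Or.inr (Set.mem_singleton _))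
  have hordneg : addOrderOf (-g) = n := by rw [addOrderOf_neg]
  refine ⟨replicate n g + replicate n (-g), ⟨?_, ?_⟩, ?_, 2, ?_, n, ?_, by omega, rfl, ?_⟩
  · intro x hx
    rcases Multiset.mem_add.1 hx with hx | hx
    · exact (eq_of_mem_replicate hx) ▸ hgmem
    · exact (eq_of_mem_replicate hx) ▸ hngmem
  · rw [sum_repl_pair_eq_zero_iff]
    simp
  · intro hz
    have := congrArg Multiset.card hz
    simp only [Multiset.card_add, Multiset.card_replicate, Multiset.card_zero] at this
    omega
  · -- length 2
    refine ⟨(replicate n g) ::ₘ {replicate n (-g)}, by simp, ?_, ?_⟩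
    · intro A hA
      rcases Multiset.mem_cons.1 hA with rfl | hA
      · have := isAtom_replicate (G₀ := ({g, -g} : Set G)) hgmem
        rwa [← hn] at this
      · rw [Multiset.mem_singleton.1 hA]
        have := isAtom_replicate (G₀ := ({g, -g} : Set G)) hngmem
        rwa [hordneg] at this
    · rw [Multiset.sum_cons, Multiset.sum_singleton]
  · -- length n
    refine ⟨replicate n ({g, -g} : Multiset G), by simp, ?_, ?_⟩
    · intro A hA
      rw [eq_of_mem_replicate hA]
      exact isAtom_pair hgmem hngmem h0
    · rw [Multiset.sum_replicate]
      have : ({g, -g} : Multiset G) = replicate 1 g + replicate 1 (-g) := by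
        simp only [Multiset.replicate_one]
        rw [Multiset.singleton_add]
        rfl
      rw [this, smul_add, Multiset.nsmul_replicate, Multiset.nsmul_replicate, mul_one]
  · -- no length strictly between 2 and n
    intro z hz ⟨h2z, hzn⟩
    have h2mem : 2 ∈ LengthSet ({g, -g} : Set G) (replicate n g + replicate n (-g)) := by
      refine ⟨(replicate n g) ::ₘ {replicate n (-g)}, by simp, ?_, ?_⟩
      · intro A hA
        rcases Multiset.mem_cons.1 hA with rfl | hA
        · have := isAtom_replicate (G₀ := ({g, -g} : Set G)) hgmem
          rwa [← hn] at this
        · rw [Multiset.mem_singleton.1 hA]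
          have := isAtom_replicate (G₀ := ({g, -g} : Set G)) hngmem
          rwa [hordneg] at this
      · rw [Multiset.sum_cons, Multiset.sum_singleton]
    have hdvd := length_congr (by omega : 3 ≤ addOrderOf g) hz h2mem
    rw [← hn] at hdvd
    obtain ⟨k, hk⟩ := hdvd
    have hnk : (n : ℤ) - 2 > 0 := by
      have : (3 : ℤ) ≤ n := by exact_mod_cast h3
      omega
    have hzpos : (z : ℤ) - 2 > 0 := by
      have : (2 : ℤ) < z := by exact_mod_cast h2z
      omega
    have hkpos : 0 < k := by
      by_contra hkneg
      push_neg at hkneg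
      have : ((n : ℤ) - 2) * k ≤ 0 := mul_nonpos_of_nonneg_of_nonpos (by omega) hkneg
      omega
    have : (n : ℤ) - 2 ≤ (z : ℤ) - 2 := by
      calc (n : ℤ) - 2 = ((n : ℤ) - 2) * 1 := by ring
      _ ≤ ((n : ℤ) - 2) * k := by
        apply mul_le_mul_of_nonneg_left _ (by omega)
        omega
      _ = (z : ℤ) - 2 := hk.symm
    have : (n : ℤ) ≤ z := by omega
    have : n ≤ z := by exact_mod_cast this
    omega

lemma sInf_deltaSet_pair {g : G} (h3 : 3 ≤ addOrderOf g) :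
    sInf (DeltaSet ({g, -g} : Set G)) = addOrderOf g - 2 := by
  set n := addOrderOf g with hn
  refine le_antisymm (Nat.sInf_le (mem_deltaSet_pair h3)) ?_
  refine le_csInf ⟨n - 2, mem_deltaSet_pair h3⟩ ?_
  rintro d ⟨B, hB, hB0, x, hx, y, hy, hxy, hdx, -⟩
  have hdvd := length_congr h3 hy hx
  rw [← hn] at hdvd
  obtain ⟨k, hk⟩ := hdvd
  have hd' : (d : ℤ) = (y : ℤ) - x := by
    have : x ≤ y := le_of_lt hxy
    omega
  have hnk : (0 : ℤ) < (n : ℤ) - 2 := by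
    have : (3 : ℤ) ≤ n := by exact_mod_cast h3
    omega
  have hdpos : (0 : ℤ) < (y : ℤ) - x := by
    have : (x : ℤ) < y := by exact_mod_cast hxy
    omega
  have hkpos : 0 < k := by
    by_contra hkneg
    push_neg at hkneg
    have : ((n : ℤ) - 2) * k ≤ 0 := mul_nonpos_of_nonneg_of_nonpos (by omega) hkneg
    omega
  have : (n : ℤ) - 2 ≤ (y : ℤ) - x := by
    calc (n : ℤ) - 2 = ((n : ℤ) - 2) * 1 := by ring
    _ ≤ ((n : ℤ) - 2) * k := by
      apply mul_le_mul_of_nonneg_left _ (by omega)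
      omega
    _ = (y : ℤ) - x := hk.symm
  have : ((n : ℤ) - 2) ≤ (d : ℤ) := by omega
  have h3' : (3 : ℤ) ≤ (n : ℤ) := by exact_mod_cast h3
  omega

end Stmt10Aux

end Helpers4
section Helpers5

variable {G : Type*} [AddCommGroup G]

namespace Stmt10Aux

open Multiset

variable [Fintype G]

lemma natCross (S : Multiset G) :
    (((S.map fun g => AddMonoid.exponent G / addOrderOf g).sum : ℕ) : ℚ) =
      (AddMonoid.exponent G : ℚ) * crossNumber S := by
  induction S using Multiset.induction with
  | empty => simp [crossNumber]
  | cons a S ih =>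
    rw [Multiset.map_cons, Multiset.sum_cons]
    have hord : addOrderOf a ∣ AddMonoid.exponent G := AddMonoid.addOrder_dvd_exponent a
    have hordpos : addOrderOf a ≠ 0 := (addOrderOf_pos a).ne'
    have hcast : ((AddMonoid.exponent G / addOrderOf a : ℕ) : ℚ) =
        (AddMonoid.exponent G : ℚ) * ((addOrderOf a : ℚ))⁻¹ := by
      rw [Nat.cast_div hord (by exact_mod_cast hordpos)]
      rw [div_eq_mul_inv]
    have hcross : crossNumber (a ::ₘ S) = ((addOrderOf a : ℚ))⁻¹ + crossNumber S := by
      unfold crossNumber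
      rw [Multiset.map_cons, Multiset.sum_cons]
    rw [Nat.cast_add, hcast, hcross, ih]
    ring

lemma three_le_exponent (hG : 2 < Fintype.card G)
    (hr : rankG G ≤ AddMonoid.exponent G - 1) : 3 ≤ AddMonoid.exponent G := by
  have h0 : AddMonoid.exponent G ≠ 0 := AddMonoid.exponent_ne_zero_of_finite
  have hnt : Nontrivial G := Fintype.one_lt_card_iff_nontrivial.1 (by omega)
  have h1 : 1 < AddMonoid.exponent G := AddMonoid.one_lt_exponent
  by_contra hcon
  push_neg at hcon
  have h2 : AddMonoid.exponent G = 2 := by omega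
  -- then G is an elementary 2-group of order > 2, so pRank G 2 ≥ 2, contradicting hr
  have hall : ∀ x : G, (2 : ℕ) • x = 0 := fun x => by
    rw [← h2]; exact AddMonoid.exponent_nsmul_eq_zero x
  have hcardsub : Nat.card {x : G // (2 : ℕ) • x = 0} = Nat.card G := by
    apply Nat.card_congr
    exact Equiv.subtypeUnivEquiv hall
  have hdvd : (2 : ℕ) ∣ Fintype.card G := by
    rw [← h2]; exact AddGroup.exponent_dvd_card
  have hcard4 : 4 ≤ Fintype.card G := by
    obtain ⟨k, hk⟩ := hdvd
    omega
  have hlog : 2 ≤ Nat.log 2 (Fintype.card G) := by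
    rw [Nat.le_log_iff_pow_le (by norm_num) (by omega)]
    simpa using hcard4
  have hp2 : pRank G 2 = Nat.log 2 (Fintype.card G) := by
    unfold pRank
    rw [hcardsub, Nat.card_eq_fintype_card]
  have hbdd : BddAbove {r : ℕ | ∃ p : ℕ, p.Prime ∧ r = pRank G p} := by
    refine ⟨Nat.log 2 (Fintype.card G), ?_⟩
    rintro r ⟨p, hp, rfl⟩
    unfold pRank
    calc Nat.log p (Nat.card {x : G // p • x = 0})
        ≤ Nat.log p (Nat.card G) := Nat.log_mono_right (Finite.card_subtype_le _)
      _ ≤ Nat.log 2 (Nat.card G) := Nat.log_anti_left (by norm_num) hp.two_le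
      _ = Nat.log 2 (Fintype.card G) := by rw [Nat.card_eq_fintype_card]
  have hmem : pRank G 2 ∈ {r : ℕ | ∃ p : ℕ, p.Prime ∧ r = pRank G p} :=
    ⟨2, Nat.prime_two, rfl⟩
  have : pRank G 2 ≤ rankG G := le_csSup hbdd hmem
  rw [hp2] at this
  rw [h2] at hr
  have hrank : rankG G = sSup {r : ℕ | ∃ p : ℕ, p.Prime ∧ r = pRank G p} := rfl
  rw [hrank] at this hr
  omega

end Stmt10Aux

end Helpers5

set_option maxHeartbeats 1000000 in
/-- If `|G| > 2`, `r(G) ≤ exp(G) − 1`, and `G₀ ⊆ G` satisfies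
`Δ(G₀) ≠ ∅` and `min Δ(G₀) = max Δ*(G)`, then `G₀` is minimal non-half-factorial and not
an LCN-set iff `G₀ = {g, −g}` for some `g ∈ G` of order `exp(G)`. -/
theorem stmt_10 {G : Type*} [AddCommGroup G] [Fintype G] (hG : 2 < Fintype.card G)
    (hr : rankG G ≤ AddMonoid.exponent G - 1) (G₀ : Set G)
    (hne : (DeltaSet G₀).Nonempty)
    (hmax : sInf (DeltaSet G₀) = sSup (DeltaStar G)) :
    (IsMinNonHalfFactorial G₀ ∧ ¬ IsLCNSet G₀) ↔
      ∃ g : G, addOrderOf g = AddMonoid.exponent G ∧ G₀ = {g, -g} := by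
  classical
  set n := AddMonoid.exponent G with hnexp
  have hn3 : 3 ≤ n := Stmt10Aux.three_le_exponent hG hr
  constructor
  · rintro ⟨hmin, hlcn⟩
    rw [IsLCNSet] at hlcn
    push_neg at hlcn
    obtain ⟨U, hU, hUk⟩ := hlcn
    set m := (U.map fun x => n / addOrderOf x).sum with hm
    have hmcast : (m : ℚ) = (n : ℚ) * crossNumber U := Stmt10Aux.natCross U
    have hnqpos : (0 : ℚ) < (n : ℚ) := by exact_mod_cast (by omega : 0 < n)
    have hmn : m < n := by
      have hq : (m : ℚ) < (n : ℚ) := by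
        rw [hmcast]
        calc (n : ℚ) * crossNumber U < (n : ℚ) * 1 :=
              mul_lt_mul_of_pos_left hUk hnqpos
          _ = (n : ℚ) := mul_one _
      exact_mod_cast hq
    have hUne : U ≠ 0 := hU.2.1
    have hone : ∀ x ∈ U, 1 ≤ n / addOrderOf x := by
      intro x hx
      have hdvd : addOrderOf x ∣ n := AddMonoid.addOrder_dvd_exponent x
      have hpos : 0 < addOrderOf x := addOrderOf_pos x
      exact (Nat.one_le_div_iff hpos).2 (Nat.le_of_dvd (by omega) hdvd)
    have hcardle : Multiset.card U ≤ m := Stmt10Aux.card_le_sum_map U _ hone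
    have hcardpos : 0 < Multiset.card U := Multiset.card_pos.2 hUne
    -- B = n • U has lengths m and n
    set B : Multiset G := n • U with hB
    have hBzs : IsZeroSumSeq G₀ B := by
      constructor
      · intro x hx
        exact hU.1.1 x (Multiset.mem_of_mem_nsmul hx)
      · rw [hB, Multiset.sum_nsmul, hU.1.2, smul_zero]
    have hBne : B ≠ 0 := by
      intro h
      have hc := congrArg Multiset.card h
      rw [hB, Multiset.card_nsmul, Multiset.card_zero] at hc
      rcases Nat.mul_eq_zero.1 hc with h' | h' <;> omega
    have hnlen : n ∈ LengthSet G₀ B := by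
      refine ⟨Multiset.replicate n U, Multiset.card_replicate _ _, ?_, ?_⟩
      · intro A hA
        rw [Multiset.eq_of_mem_replicate hA]
        exact hU
      · rw [Multiset.sum_replicate]
    have hmlen : m ∈ LengthSet G₀ B := by
      refine ⟨(U.map fun x =>
        Multiset.replicate (n / addOrderOf x) (Multiset.replicate (addOrderOf x) x)).sum,
        ?_, ?_, ?_⟩
      · rw [Stmt10Aux.card_msum, Multiset.map_map, hm]
        congr 1
        apply Multiset.map_congr rfl
        intro x _
        simp
      · intro A hA
        obtain ⟨C, hC, hAC⟩ := Stmt10Aux.mem_msum hA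
        obtain ⟨x, hxU, rfl⟩ := Multiset.mem_map.1 hC
        rw [Multiset.eq_of_mem_replicate hAC]
        exact Stmt10Aux.isAtom_replicate (hU.1.1 x hxU)
      · rw [Stmt10Aux.sum_msum (U.map fun x =>
          Multiset.replicate (n / addOrderOf x) (Multiset.replicate (addOrderOf x) x)),
          Multiset.map_map]
        have h1 : U.map (Multiset.sum ∘ fun x =>
            Multiset.replicate (n / addOrderOf x) (Multiset.replicate (addOrderOf x) x)) =
            U.map fun x => Multiset.replicate n x := by
          apply Multiset.map_congr rfl
          intro x _
          show (Multiset.replicate (n / addOrderOf x)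
            (Multiset.replicate (addOrderOf x) x)).sum = _
          rw [Multiset.sum_replicate, Multiset.nsmul_replicate,
            Nat.div_mul_cancel (AddMonoid.addOrder_dvd_exponent x)]
        rw [h1, Stmt10Aux.map_replicate_sum]
    -- successor length above m
    set T : Set ℕ := {z | z ∈ LengthSet G₀ B ∧ m < z} with hT
    have hnT : n ∈ T := ⟨hnlen, hmn⟩
    have hyT : sInf T ∈ T := Nat.sInf_mem ⟨n, hnT⟩
    set y := sInf T with hy
    have hyn : y ≤ n := Nat.sInf_le hnT
    have hdmem : y - m ∈ DeltaSet G₀ := by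
      refine ⟨B, hBzs, hBne, m, hmlen, y, hyT.1, hyT.2, rfl, ?_⟩
      intro z hz hcon
      have : z ∈ T := ⟨hz, hcon.1⟩
      have := Nat.sInf_le this
      omega
    have hsinf_le : sInf (DeltaSet G₀) ≤ y - m := Nat.sInf_le hdmem
    -- lower bound: n - 2 ∈ Δ*(G)
    obtain ⟨g₀, hg₀⟩ := AddMonoid.exists_addOrderOf_eq_exponent
      (AddMonoid.ExponentExists.of_finite (G := G))
    have hg₀3 : 3 ≤ addOrderOf g₀ := by rw [hg₀, ← hnexp]; omega
    have hstar : n - 2 ∈ DeltaStar G := by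
      refine ⟨({g₀, -g₀} : Set G), ⟨addOrderOf g₀ - 2, Stmt10Aux.mem_deltaSet_pair hg₀3⟩, ?_⟩
      rw [Stmt10Aux.sInf_deltaSet_pair hg₀3, hg₀, ← hnexp]
    have hlow : n - 2 ≤ sInf (DeltaSet G₀) := by
      by_cases hbdd : BddAbove (DeltaStar G)
      · rw [hmax]
        exact le_csSup hbdd hstar
      · exfalso
        rw [csSup_of_not_bddAbove hbdd, csSup_empty] at hmax
        have h0mem := Nat.sInf_mem hne
        rw [hmax] at h0mem
        have := Stmt10Aux.deltaSet_pos h0mem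
        simp at this
    -- conclude m ≤ 2
    have hm2 : m ≤ 2 := by omega
    have hcardU2 : Multiset.card U = 2 := by
      rcases Nat.lt_or_ge (Multiset.card U) 2 with h | h
      · exfalso
        have h1 : Multiset.card U = 1 := by omega
        obtain ⟨x, rfl⟩ := Multiset.card_eq_one.1 h1
        have hx0 : x = 0 := by
          have := hU.1.2
          simpa using this
        have : m = n / addOrderOf x := by
          rw [hm]
          simp
        rw [hx0, addOrderOf_zero, Nat.div_one] at this
        omega
      · omega
    obtain ⟨u, v, rfl⟩ := Multiset.card_eq_two.1 hcardU2
    have hmuv : m = n / addOrderOf u + n / addOrderOf v := by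
      rw [hm]
      simp
    have h1u : 1 ≤ n / addOrderOf u := hone u (Multiset.mem_cons_self _ _)
    have h1v : 1 ≤ n / addOrderOf v :=
      hone v (Multiset.mem_cons_of_mem (Multiset.mem_singleton_self _))
    have hdu : n / addOrderOf u = 1 := by omega
    have hdv : n / addOrderOf v = 1 := by omega
    have hordu : addOrderOf u = n := by
      have := Nat.div_mul_cancel (AddMonoid.addOrder_dvd_exponent u)
      rw [← hnexp] at this
      rw [hdu, one_mul] at this
      exact this
    have hsumuv : u + v = 0 := by
      have := hU.1.2
      simpa using this
    have hv : v = -u := eq_neg_of_add_eq_zero_right hsumuv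
    have humem : u ∈ G₀ := hU.1.1 u (Multiset.mem_cons_self _ _)
    have hvmem : -u ∈ G₀ := by
      rw [← hv]
      exact hU.1.1 v (Multiset.mem_cons_of_mem (Multiset.mem_singleton_self _))
    have hPsub : ({u, -u} : Set G) ⊆ G₀ := by
      intro z hz
      rcases Set.mem_insert_iff.1 hz with rfl | hz
      · exact humem
      · rw [Set.mem_singleton_iff.1 hz]
        exact hvmem
    have hu3 : 3 ≤ addOrderOf u := by rw [hordu]; omega
    have hPne : (DeltaSet ({u, -u} : Set G)).Nonempty :=
      ⟨addOrderOf u - 2, Stmt10Aux.mem_deltaSet_pair hu3⟩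
    have hPeq : ({u, -u} : Set G) = G₀ := by
      by_contra hcon
      have hss : ({u, -u} : Set G) ⊂ G₀ := Set.ssubset_iff_subset_ne.2 ⟨hPsub, hcon⟩
      have := hmin.2 _ hss
      rw [this] at hPne
      exact Set.not_nonempty_empty hPne
    exact ⟨u, hordu, hPeq.symm⟩
  · rintro ⟨g, hgord, rfl⟩
    have hg3 : 3 ≤ addOrderOf g := by rw [hgord]; exact hn3
    have h0 : g ≠ 0 := by
      intro h
      rw [h, addOrderOf_zero] at hg3
      omega
    have hgmem : g ∈ ({g, -g} : Set G) := Set.mem_insert _ _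
    have hngmem : -g ∈ ({g, -g} : Set G) :=
      Set.mem_insert_iff.2 (Or.inr (Set.mem_singleton _))
    refine ⟨⟨hne, ?_⟩, ?_⟩
    · intro G₁ hss
      obtain ⟨x, hxG, hxn⟩ := Set.exists_of_ssubset hss
      rcases Set.mem_insert_iff.1 hxG with hxg | hxg
      · -- g ∉ G₁, so G₁ ⊆ {-g}
        rw [hxg] at hxn
        apply Stmt10Aux.deltaSet_subsingleton (h := -g)
        intro z hz
        have hzP := hss.1 hz
        rcases Set.mem_insert_iff.1 hzP with hz' | hz'
        · rw [hz'] at hz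
          exact absurd hz hxn
        · exact hz'
      · rw [Set.mem_singleton_iff.1 hxg] at hxn
        apply Stmt10Aux.deltaSet_subsingleton (h := g)
        intro z hz
        have hzP := hss.1 hz
        rcases Set.mem_insert_iff.1 hzP with hz' | hz'
        · rw [hz']
          exact Set.mem_singleton _
        · rw [Set.mem_singleton_iff.1 hz'] at hz
          exact absurd hz hxn
    · intro hlcn
      have hatom : IsAtomSeq ({g, -g} : Set G) ({g, -g} : Multiset G) :=
        Stmt10Aux.isAtom_pair hgmem hngmem h0
      have hge := hlcn _ hatom
      have hcn : crossNumber ({g, -g} : Multiset G) =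
          ((addOrderOf g : ℚ))⁻¹ + ((addOrderOf g : ℚ))⁻¹ := by
        unfold crossNumber
        rw [show ({g, -g} : Multiset G) = g ::ₘ {-g} from rfl]
        rw [Multiset.map_cons, Multiset.sum_cons, Multiset.map_singleton,
          Multiset.sum_singleton, addOrderOf_neg]
      rw [hcn, hgord] at hge
      have hq3 : (3 : ℚ) ≤ (n : ℚ) := by exact_mod_cast hn3
      have hnq : (0 : ℚ) < (n : ℚ) := by linarith
      have h2n : (1 : ℚ) ≤ 2 * (n : ℚ)⁻¹ := by
        rw [two_mul]
        exact hge
      have : (n : ℚ) ≤ 2 := by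
        have hh := mul_le_mul_of_nonneg_left h2n (le_of_lt hnq)
        rw [mul_one] at hh
        have : (n : ℚ) * (2 * (n : ℚ)⁻¹) = 2 := by
          field_simp
        linarith [hh, this]
      linarith
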